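/- For all real w > z, we have Φ(w)·w·e^{-z²/2} − Φ(z)·z·e^{-w²/2} > 0, and for w < z the reverse strict inequality holds. -/

import Mathlib

open Real MeasureTheory Set Filter Topology intervalIntegral

/-- The standard normal cumulative distribution function. -/
noncomputable def stdNormalCDF (w : ℝ) : ℝ :=
  ∫ x in Set.Iic w, (Real.sqrt (2 * Real.pi))⁻¹ * Real.exp (-x ^ 2 / 2)

noncomputable def npdf (x : ℝ) : ℝ := (Real.sqrt (2 * Real.pi))⁻¹ * Real.exp (-x ^ 2 / 2)

lemma npdf_pos (x : ℝ) : 0 < npdf x := by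
  have : 0 < Real.sqrt (2 * Real.pi) := Real.sqrt_pos.2 (by positivity)
  exact mul_pos (inv_pos.2 this) (Real.exp_pos _)

lemma continuous_npdf : Continuous npdf := by
  unfold npdf; continuity

lemma integrable_npdf : Integrable npdf := by
  have h := (integrable_exp_neg_mul_sq (b := (1:ℝ)/2) (by norm_num)).const_mul
    (Real.sqrt (2 * Real.pi))⁻¹
  refine h.congr (Eventually.of_forall fun x => ?_)
  unfold npdf; ring_nf

lemma hasDerivAt_cdf (w : ℝ) : HasDerivAt stdNormalCDF (npdf w) w := by
  have key : ∀ u : ℝ, stdNormalCDF u = stdNormalCDF 0 + ∫ x in (0:ℝ)..u, npdf x := by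
    intro u
    have := integral_Iic_sub_Iic (integrable_npdf.integrableOn) (integrable_npdf.integrableOn)
      (a := (0:ℝ)) (b := u)
    simp only [stdNormalCDF, npdf] at this ⊢
    linarith [this]
  have hd : HasDerivAt (fun u => stdNormalCDF 0 + ∫ x in (0:ℝ)..u, npdf x) (npdf w) w := by
    refine HasDerivAt.const_add _ ?_
    exact integral_hasDerivAt_right (integrable_npdf.intervalIntegrable)
      (continuous_npdf.aestronglyMeasurable.stronglyMeasurableAtFilter)
      continuous_npdf.continuousAt
  exact hd.congr_of_eventuallyEq (Eventually.of_forall key)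

lemma hasDerivAt_npdf (x : ℝ) : HasDerivAt npdf (-x * npdf x) x := by
  have h1 : HasDerivAt (fun t : ℝ => -t ^ 2 / 2) (-x) x := by
    have : HasDerivAt (fun t : ℝ => t ^ 2) (2 * x) x := by
      simpa using (hasDerivAt_pow 2 x)
    exact (this.neg.div_const 2).congr_deriv (by ring)
  have h2 := (Real.hasDerivAt_exp _).comp x h1
  have := h2.const_mul (Real.sqrt (2 * Real.pi))⁻¹
  refine this.congr_deriv ?_
  unfold npdf; simp [Function.comp]; ring

lemma cdf_nonneg (w : ℝ) : 0 ≤ stdNormalCDF w :=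
  setIntegral_nonneg measurableSet_Iic fun x _ => (npdf_pos x).le

lemma cdf_mono : Monotone stdNormalCDF := by
  intro a b hab
  have := integral_Iic_sub_Iic (integrable_npdf.integrableOn) (integrable_npdf.integrableOn)
    (a := a) (b := b)
  have h2 : 0 ≤ ∫ x in a..b, npdf x :=
    intervalIntegral.integral_nonneg hab fun x _ => (npdf_pos x).le
  simp only [stdNormalCDF, npdf] at this ⊢
  simp only [npdf] at h2
  linarith

lemma cdf_pos (w : ℝ) : 0 < stdNormalCDF w := by
  have := integral_Iic_sub_Iic (integrable_npdf.integrableOn) (integrable_npdf.integrableOn)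
    (a := w - 1) (b := w)
  have h2 : 0 < ∫ x in (w-1)..w, npdf x := by
    refine intervalIntegral.intervalIntegral_pos_of_pos_on
      (integrable_npdf.intervalIntegrable) (fun x _ => npdf_pos x) (by linarith)
  have h3 := cdf_nonneg (w - 1)
  simp only [stdNormalCDF, npdf] at this h3 ⊢
  simp only [npdf] at h2
  linarith

noncomputable def FF (w : ℝ) : ℝ := stdNormalCDF w + w * npdf w / (1 + w ^ 2)

lemma hasDerivAt_FF (w : ℝ) : HasDerivAt FF (2 * npdf w / (1 + w ^ 2) ^ 2) w := by
  have hw : (1 : ℝ) + w ^ 2 ≠ 0 := by positivity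
  have h1 : HasDerivAt (fun t : ℝ => t * npdf t) (npdf w + w * (-w * npdf w)) w := by
    exact ((hasDerivAt_id w).mul (hasDerivAt_npdf w)).congr_deriv (by simp)
  have h2 : HasDerivAt (fun t : ℝ => 1 + t ^ 2) (2 * w) w := by
    simpa using ((hasDerivAt_pow 2 w).const_add 1)
  have h3 := h1.div h2 hw
  have h4 := (hasDerivAt_cdf w).add h3
  refine h4.congr_deriv ?_
  field_simp
  ring

lemma cdf_le_exp {w : ℝ} (hw : w ≤ -2) :
    stdNormalCDF w ≤ (Real.sqrt (2 * Real.pi))⁻¹ * Real.exp w := by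
  have hc : (0:ℝ) < (Real.sqrt (2 * Real.pi))⁻¹ := by positivity
  have h1 : stdNormalCDF w ≤ ∫ x in Iic w, (Real.sqrt (2 * Real.pi))⁻¹ * Real.exp x := by
    refine setIntegral_mono_on integrable_npdf.integrableOn
      (((integrableOn_exp_Iic w).const_mul _)) measurableSet_Iic fun x hx => ?_
    have hx' : x ≤ -2 := le_trans hx hw
    have : -x ^ 2 / 2 ≤ x := by nlinarith
    exact mul_le_mul_of_nonneg_left (Real.exp_le_exp.2 this) hc.le
  calc stdNormalCDF w ≤ _ := h1
    _ = (Real.sqrt (2 * Real.pi))⁻¹ * Real.exp w := by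
        rw [MeasureTheory.integral_const_mul, integral_exp_Iic]

lemma npdf_le_exp {w : ℝ} (hw : w ≤ -2) :
    npdf w ≤ (Real.sqrt (2 * Real.pi))⁻¹ * Real.exp w := by
  have hc : (0:ℝ) < (Real.sqrt (2 * Real.pi))⁻¹ := by positivity
  have : -w ^ 2 / 2 ≤ w := by nlinarith
  exact mul_le_mul_of_nonneg_left (Real.exp_le_exp.2 this) hc.le

lemma exp_bound_tendsto : Tendsto (fun w => (Real.sqrt (2 * Real.pi))⁻¹ * Real.exp w)
    atBot (𝓝 0) := by
  simpa using Real.tendsto_exp_atBot.const_mul (Real.sqrt (2 * Real.pi))⁻¹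

lemma tendsto_cdf_atBot : Tendsto stdNormalCDF atBot (𝓝 0) := by
  refine tendsto_of_tendsto_of_tendsto_of_le_of_le' tendsto_const_nhds exp_bound_tendsto
    (Eventually.of_forall fun w => cdf_nonneg w) ?_
  filter_upwards [eventually_le_atBot (-2:ℝ)] with w hw using cdf_le_exp hw

lemma tendsto_FF_atBot : Tendsto FF atBot (𝓝 0) := by
  have hg : Tendsto (fun w => w * npdf w / (1 + w ^ 2)) atBot (𝓝 0) := by
    refine squeeze_zero_norm' ?_ exp_bound_tendsto
    filter_upwards [eventually_le_atBot (-2:ℝ)] with w hw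
    have h1 : (0:ℝ) < 1 + w ^ 2 := by positivity
    have h2 : |w| / (1 + w ^ 2) ≤ 1 := by
      rw [div_le_one h1]; nlinarith [abs_nonneg w, sq_abs w]
    have h3 : ‖w * npdf w / (1 + w ^ 2)‖ = |w| / (1 + w ^ 2) * npdf w := by
      rw [Real.norm_eq_abs, abs_div, abs_mul, abs_of_pos (npdf_pos w), abs_of_pos h1]
      ring
    calc ‖w * npdf w / (1 + w ^ 2)‖ = |w| / (1 + w ^ 2) * npdf w := h3
      _ ≤ 1 * npdf w := mul_le_mul_of_nonneg_right h2 (npdf_pos w).le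
      _ = npdf w := one_mul _
      _ ≤ _ := npdf_le_exp hw
  have := tendsto_cdf_atBot.add hg
  rw [add_zero] at this; exact this

lemma FF_pos (w : ℝ) : 0 < FF w := by
  have hmono : StrictMono FF :=
    strictMono_of_hasDerivAt_pos hasDerivAt_FF fun x => by have := npdf_pos x; positivity
  have h0 : 0 ≤ FF (w - 1) := by
    refine le_of_tendsto tendsto_FF_atBot ?_
    filter_upwards [eventually_le_atBot (w - 1)] with t ht using hmono.monotone ht
  exact lt_of_le_of_lt h0 (hmono (by linarith))

noncomputable def hh (w : ℝ) : ℝ := w * Real.exp (w ^ 2 / 2) * stdNormalCDF w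

lemma hasDerivAt_hh (w : ℝ) :
    HasDerivAt hh (Real.exp (w ^ 2 / 2) * (1 + w ^ 2) * FF w) w := by
  have hw : (1 : ℝ) + w ^ 2 ≠ 0 := by positivity
  have h1 : HasDerivAt (fun t : ℝ => Real.exp (t ^ 2 / 2)) (w * Real.exp (w ^ 2 / 2)) w := by
    have hq : HasDerivAt (fun t : ℝ => t ^ 2 / 2) w w := by
      have : HasDerivAt (fun t : ℝ => t ^ 2) (2 * w) w := by simpa using hasDerivAt_pow 2 w
      exact (this.div_const 2).congr_deriv (by ring)
    have := (Real.hasDerivAt_exp _).comp w hq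
    exact this.congr_deriv (by ring)
  have h2 : HasDerivAt (fun t : ℝ => t * Real.exp (t ^ 2 / 2))
      (1 * Real.exp (w ^ 2 / 2) + w * (w * Real.exp (w ^ 2 / 2))) w := by
    exact ((hasDerivAt_id w).mul h1).congr_deriv (by simp)
  have h3 := h2.mul (hasDerivAt_cdf w)
  have h4 : HasDerivAt hh
      ((1 * Real.exp (w ^ 2 / 2) + w * (w * Real.exp (w ^ 2 / 2))) * stdNormalCDF w
        + w * Real.exp (w ^ 2 / 2) * npdf w) w := h3
  refine h4.congr_deriv ?_
  unfold FF
  field_simp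

lemma hh_strictMono : StrictMono hh :=
  strictMono_of_hasDerivAt_pos hasDerivAt_hh fun x =>
    mul_pos (mul_pos (Real.exp_pos _) (by positivity)) (FF_pos x)

lemma key_ineq {a b : ℝ} (hab : a < b) :
    0 < stdNormalCDF b * b * Real.exp (-a ^ 2 / 2) - stdNormalCDF a * a * Real.exp (-b ^ 2 / 2) := by
  have h1 : hh a < hh b := hh_strictMono hab
  have ea : Real.exp (a ^ 2 / 2) * Real.exp (-a ^ 2 / 2) = 1 := by
    rw [← Real.exp_add, show a ^ 2 / 2 + -a ^ 2 / 2 = 0 by ring, Real.exp_zero]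
  have eb : Real.exp (b ^ 2 / 2) * Real.exp (-b ^ 2 / 2) = 1 := by
    rw [← Real.exp_add, show b ^ 2 / 2 + -b ^ 2 / 2 = 0 by ring, Real.exp_zero]
  have heq : stdNormalCDF b * b * Real.exp (-a ^ 2 / 2)
      - stdNormalCDF a * a * Real.exp (-b ^ 2 / 2)
      = (hh b - hh a) * (Real.exp (-a ^ 2 / 2) * Real.exp (-b ^ 2 / 2)) := by
    unfold hh
    linear_combination (stdNormalCDF a * a * Real.exp (-b ^ 2 / 2)) * ea
      - (stdNormalCDF b * b * Real.exp (-a ^ 2 / 2)) * eb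
  rw [heq]
  exact mul_pos (by linarith) (mul_pos (Real.exp_pos _) (Real.exp_pos _))

theorem stmt6 (w z : ℝ) :
    (z < w →
      0 < stdNormalCDF w * w * Real.exp (-z ^ 2 / 2)
            - stdNormalCDF z * z * Real.exp (-w ^ 2 / 2)) ∧
    (w < z →
      stdNormalCDF w * w * Real.exp (-z ^ 2 / 2)
        - stdNormalCDF z * z * Real.exp (-w ^ 2 / 2) < 0) := by
  constructor
  · exact fun h => key_ineq h
  · intro h
    have := key_ineq h
    linarith
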